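/- Let N, L be positive naturals, x₁,…,x_N ∈ ℝ^d, K_{ij} = ⟨x_i, x_j⟩, y : {1,…,N} → {1,…,L}, C : {1,…,N} → ℝ, and e ∈ ℝ^{N×L} with e_{i,y_i} = 0 for all i. Let D = {α ∈ ℝ^{N×L} : Σ_l α_{il} = 0 ∀i, α_{i,y_i} ≤ C_i, α_{il} ≤ 0 ∀l ≠ y_i} and W(α) = −(1/2)Σ_{i,j}Σ_l α_{il}α_{jl}K_{ij} − Σ_{i,l}α_{il}e_{il}. Then for every α ∈ D and every (w, ξ) ∈ (ℝ^d)^L × ℝ^N satisfying ⟨w_{y_i} − w_l, x_i⟩ ≥ e_{il} − ξ_i for all i and l, one has W(α) ≤ (1/2)Σ_{l=1}^L ‖w_l‖² + Σ_{i=1}^N C_i ξ_i. -/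
import Mathlib


open Matrix

/-- Dot product distributes over a finite sum in the first argument. -/
lemma MUSVM.sumdot {ι d : Type*} [Fintype d] (s : Finset ι) (f : ι → d → ℝ) (u : d → ℝ) :
    (∑ i ∈ s, f i) ⬝ᵥ u = ∑ i ∈ s, f i ⬝ᵥ u := by
  simp only [dotProduct, Finset.sum_apply, Finset.sum_mul]
  exact Finset.sum_comm

/-- Dot product distributes over a finite sum in the second argument. -/
lemma MUSVM.dotsum {ι d : Type*} [Fintype d] (s : Finset ι) (f : ι → d → ℝ) (u : d → ℝ) :
    u ⬝ᵥ (∑ i ∈ s, f i) = ∑ i ∈ s, u ⬝ᵥ f i := by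
  simp only [dotProduct, Finset.sum_apply, Finset.mul_sum]
  exact Finset.sum_comm

/-- Weak duality between the MU-SVM primal (4) on the augmented dataset and its
dual (5), for the linear kernel `K_{ij} = ⟨x_i, x_j⟩`: every dual-feasible `α`
has dual objective at most the primal objective of every primal-feasible `(w, ξ)`. -/
theorem stmt_11 {N L d : ℕ} (hN : 0 < N) (hL : 0 < L)
    (x : Fin N → Fin d → ℝ)
    (K : Matrix (Fin N) (Fin N) ℝ) (hK : ∀ i j, K i j = x i ⬝ᵥ x j)
    (y : Fin N → Fin L) (C : Fin N → ℝ)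
    (e : Fin N → Fin L → ℝ) (he : ∀ i, e i (y i) = 0)
    (D : Set (Fin N → Fin L → ℝ))
    (hD : D = {a | (∀ i, ∑ l, a i l = 0) ∧ (∀ i, a i (y i) ≤ C i) ∧
      ∀ i, ∀ l, l ≠ y i → a i l ≤ 0})
    (W : (Fin N → Fin L → ℝ) → ℝ)
    (hW : ∀ a : Fin N → Fin L → ℝ,
      W a = -(1/2) * (∑ i, ∑ j, ∑ l, a i l * a j l * K i j) - ∑ i, ∑ l, a i l * e i l)
    (α : Fin N → Fin L → ℝ) (hα : α ∈ D)
    (w : Fin L → Fin d → ℝ) (ξ : Fin N → ℝ)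
    (hfeas : ∀ i l, (w (y i) - w l) ⬝ᵥ x i ≥ e i l - ξ i) :
    W α ≤ (1/2) * (∑ l, w l ⬝ᵥ w l) + ∑ i, C i * ξ i := by
  rw [hD] at hα
  obtain ⟨hsum, hCb, hneg⟩ := hα
  -- ξ is nonnegative (from feasibility at l = y i)
  have hξ : ∀ i, 0 ≤ ξ i := by
    intro i
    have h := hfeas i (y i)
    simp [he i, sub_self] at h
    linarith
  set v : Fin L → Fin d → ℝ := fun l => ∑ i, α i l • x i with hv
  -- quadratic term identity : the kernel quadratic form is ∑ₗ ‖vₗ‖²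
  have hQ : (∑ i, ∑ j, ∑ l, α i l * α j l * K i j) = ∑ l, v l ⬝ᵥ v l := by
    have h1 : ∀ l, v l ⬝ᵥ v l = ∑ i, ∑ j, α i l * α j l * K i j := by
      intro l
      rw [hv]
      simp only [MUSVM.sumdot, MUSVM.dotsum, smul_dotProduct, dotProduct_smul,
        smul_eq_mul, Finset.mul_sum]
      refine Finset.sum_congr rfl fun i _ => Finset.sum_congr rfl fun j _ => ?_
      rw [hK i j, dotProduct_comm]
      ring
    simp only [h1]
    have e1 : (∑ i, ∑ j, ∑ l, α i l * α j l * K i j)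
        = ∑ i, ∑ l, ∑ j, α i l * α j l * K i j :=
      Finset.sum_congr rfl fun i _ => Finset.sum_comm
    have e2 : (∑ i : Fin N, ∑ l : Fin L, ∑ j, α i l * α j l * K i j)
        = ∑ l, ∑ i, ∑ j, α i l * α j l * K i j := Finset.sum_comm
    rw [e1, e2]
  -- mixed term identity
  have hM : (∑ i, ∑ l, α i l * (w l ⬝ᵥ x i)) = ∑ l, w l ⬝ᵥ v l := by
    have h1 : ∀ l, w l ⬝ᵥ v l = ∑ i, α i l * (w l ⬝ᵥ x i) := by
      intro l
      rw [hv]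
      simp only [MUSVM.dotsum, dotProduct_smul, smul_eq_mul]
    simp only [h1]
    exact Finset.sum_comm
  -- per-sample key inequality from complementary-slackness style bounding
  have key : ∀ i, -(C i * ξ i) ≤ (∑ l, α i l * e i l) + ∑ l, α i l * (w l ⬝ᵥ x i) := by
    intro i
    set g : Fin L → ℝ := fun l => α i l * (e i l - ((w (y i) - w l) ⬝ᵥ x i) - ξ i) with hg
    have hg_sum : ∑ l, g l = (∑ l, α i l * e i l) + ∑ l, α i l * (w l ⬝ᵥ x i) := by
      have hterm : ∀ l, g l = α i l * e i l + α i l * (w l ⬝ᵥ x i)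
          - (w (y i) ⬝ᵥ x i + ξ i) * α i l := by
        intro l
        simp only [hg, sub_dotProduct]
        ring
      rw [Finset.sum_congr rfl fun l _ => hterm l]
      simp only [Finset.sum_sub_distrib, Finset.sum_add_distrib, ← Finset.mul_sum,
        hsum i, mul_zero, sub_zero]
    have hgy : g (y i) = -(α i (y i) * ξ i) := by
      simp [hg, he i, sub_self]
    have hge : ∀ l, l ≠ y i → 0 ≤ g l := by
      intro l hl
      have h1 : α i l ≤ 0 := hneg i l hl
      have h2 : e i l - ((w (y i) - w l) ⬝ᵥ x i) - ξ i ≤ 0 := by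
        have := hfeas i l; linarith
      have : (0:ℝ) ≤ α i l * (e i l - ((w (y i) - w l) ⬝ᵥ x i) - ξ i) := by
        nlinarith [mul_nonneg (neg_nonneg.2 h1) (neg_nonneg.2 h2)]
      simpa [hg] using this
    have hsplit : ∑ l, g l = g (y i) + ∑ l ∈ Finset.univ.erase (y i), g l :=
      (Finset.add_sum_erase _ g (Finset.mem_univ (y i))).symm
    have hrest : 0 ≤ ∑ l ∈ Finset.univ.erase (y i), g l :=
      Finset.sum_nonneg fun l hl => hge l (Finset.ne_of_mem_erase hl)
    have hC' : α i (y i) * ξ i ≤ C i * ξ i :=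
      mul_le_mul_of_nonneg_right (hCb i) (hξ i)
    rw [← hg_sum, hsplit, hgy]
    linarith
  have hsum_key : -(∑ i, C i * ξ i) ≤
      (∑ i, ∑ l, α i l * e i l) + ∑ i, ∑ l, α i l * (w l ⬝ᵥ x i) := by
    have h := Finset.sum_le_sum (fun i (_ : i ∈ Finset.univ) => key i)
    simpa [Finset.sum_add_distrib] using h
  -- per-class completion of the square
  have hsq : ∀ l, w l ⬝ᵥ v l - (1/2) * (v l ⬝ᵥ v l) ≤ (1/2) * (w l ⬝ᵥ w l) := by
    intro l
    have h0 : 0 ≤ (w l - v l) ⬝ᵥ (w l - v l) :=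
      Finset.sum_nonneg fun k _ => mul_self_nonneg _
    have hexp : (w l - v l) ⬝ᵥ (w l - v l)
        = w l ⬝ᵥ w l - 2 * (w l ⬝ᵥ v l) + v l ⬝ᵥ v l := by
      simp only [sub_dotProduct, dotProduct_sub, dotProduct_comm (v l) (w l)]
      ring
    rw [hexp] at h0
    linarith
  have hsq_sum : (∑ l, w l ⬝ᵥ v l) - (1/2) * (∑ l, v l ⬝ᵥ v l)
      ≤ (1/2) * ∑ l, w l ⬝ᵥ w l := by
    have h := Finset.sum_le_sum (fun l (_ : l ∈ Finset.univ) => hsq l)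
    rw [Finset.sum_sub_distrib] at h
    rw [Finset.mul_sum, Finset.mul_sum]
    simpa [Finset.mul_sum] using h
  rw [hW, hQ]
  rw [hM] at hsum_key
  linarith
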